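/- Define μ : ℤ → ℝ by μ(n) = 1/2 + 1/(6√n) for n ≥ 1 and μ(n) = 1/2 for n ≤ 0, and c_k(n) = μ(n) - μ(n-k). Then for every k ∈ ℤ with |k| ≥ 2, one has (1/36) log(1 + |k|) ≤ ‖c_k‖₂² ≤ (1/18)(1 + log|k|). -/

import Mathlib

lemma tele_sum (h : ℕ → ℝ) (h0 : ∀ j, 0 ≤ h j) (N L : ℕ) :
    ∑ j ∈ Finset.range L, (h j - h (j + N)) ≤ ∑ j ∈ Finset.range N, h j := by
  rw [Finset.sum_sub_distrib]
  have h1 : ∑ j ∈ Finset.range L, h (j + N) = ∑ j ∈ Finset.Ico N (N + L), h j := by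
    rw [Finset.sum_Ico_eq_sum_range]
    simp [add_comm]
  rw [h1]
  rcases le_or_gt L N with hLN | hNL
  · have h2 : ∑ j ∈ Finset.range L, h j ≤ ∑ j ∈ Finset.range N, h j :=
      Finset.sum_le_sum_of_subset_of_nonneg (Finset.range_subset_range.mpr hLN)
        (fun i _ _ => h0 i)
    have h3 : (0:ℝ) ≤ ∑ j ∈ Finset.Ico N (N + L), h j :=
      Finset.sum_nonneg fun i _ => h0 i
    linarith
  · have hsplit : ∑ j ∈ Finset.range N, h j + ∑ j ∈ Finset.Ico N L, h j
        = ∑ j ∈ Finset.range L, h j := by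
      rw [Finset.range_eq_Ico, Finset.range_eq_Ico]
      exact Finset.sum_Ico_consecutive _ (Nat.zero_le N) hNL.le
    have h4 : ∑ j ∈ Finset.Ico N L, h j ≤ ∑ j ∈ Finset.Ico N (N + L), h j :=
      Finset.sum_le_sum_of_subset_of_nonneg
        (Finset.Ico_subset_Ico le_rfl (by omega)) (fun i _ _ => h0 i)
    linarith

lemma sqA (x : ℝ) (hx : 0 ≤ x) : (1 / (6 * Real.sqrt (x + 1))) ^ 2 = (1/36) * (x + 1)⁻¹ := by
  have h : Real.sqrt (x + 1) ^ 2 = x + 1 := Real.sq_sqrt (by linarith)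
  have hx1 : x + 1 ≠ 0 := by linarith
  rw [div_pow, mul_pow, h]
  rw [one_pow, one_div, mul_inv, ← one_div]
  norm_num

lemma Amono (x y : ℝ) (hy : 0 ≤ y) (hxy : y ≤ x) :
    1 / (6 * Real.sqrt (x + 1)) ≤ 1 / (6 * Real.sqrt (y + 1)) := by
  have h1 : 0 < Real.sqrt (y + 1) := Real.sqrt_pos.mpr (by linarith)
  have h2 : Real.sqrt (y+1) ≤ Real.sqrt (x+1) := Real.sqrt_le_sqrt (by linarith)
  gcongr

lemma key (μ : ℤ → ℝ)
    (hμ : ∀ n : ℤ, μ n = if 1 ≤ n then 1 / 2 + 1 / (6 * Real.sqrt (n : ℝ)) else 1 / 2)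
    (c : ℤ → ℤ → ℝ) (hc : ∀ k n, c k n = μ n - μ (n - k))
    (N : ℕ) (hN : 2 ≤ N) :
    (1 / 36) * Real.log (1 + (N:ℝ)) ≤ ∑' n : ℤ, (c (N:ℤ) n) ^ 2 ∧
      ∑' n : ℤ, (c (N:ℤ) n) ^ 2 ≤ (1 / 18) * (1 + Real.log (N:ℝ)) := by
  -- explicit formula for terms at positive integers
  have hcform : ∀ m : ℕ, c (N:ℤ) ((m:ℤ)+1) = 1 / (6 * Real.sqrt ((m:ℝ)+1)) -
      (if N ≤ m then 1 / (6 * Real.sqrt ((m:ℝ)+1-(N:ℝ))) else 0) := by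
    intro m
    rw [hc, hμ, hμ, if_pos (show (1:ℤ) ≤ (m:ℤ)+1 by omega)]
    by_cases h2 : N ≤ m
    · rw [if_pos h2, if_pos (show (1:ℤ) ≤ (m:ℤ)+1-(N:ℤ) by omega)]
      push_cast
      ring
    · rw [if_neg h2, if_neg (show ¬ (1:ℤ) ≤ (m:ℤ)+1-(N:ℤ) by omega)]
      push_cast
      ring
  -- vanishing for n ≤ 0
  have hvanish : ∀ n : ℤ, n < 1 → c (N:ℤ) n = 0 := by
    intro n hn
    rw [hc, hμ, hμ, if_neg (by omega), if_neg (by omega)]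
    ring
  -- reindexing
  have hinj : Function.Injective (fun m : ℕ => (m:ℤ) + 1) := by
    intro a b hab
    simp only at hab
    omega
  have hsupp : Function.support (fun n : ℤ => (c (N:ℤ) n) ^ 2)
      ⊆ Set.range (fun m : ℕ => (m:ℤ) + 1) := by
    intro n hn
    rcases lt_or_ge n 1 with h | h
    · exfalso
      apply hn
      simp [hvanish n h]
    · exact ⟨(n-1).toNat, by simp; omega⟩
  have hre : ∑' m : ℕ, (c (N:ℤ) ((m:ℤ)+1)) ^ 2 = ∑' n : ℤ, (c (N:ℤ) n) ^ 2 :=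
    Function.Injective.tsum_eq hinj hsupp
  have key1 : ∀ m : ℕ, m < N → (c (N:ℤ) ((m:ℤ)+1))^2 = (1/36) * ((m:ℝ)+1)⁻¹ := by
    intro m hm
    rw [hcform m, if_neg (by omega), sub_zero]
    exact sqA m (Nat.cast_nonneg m)
  have key2 : ∀ m : ℕ, N ≤ m → (c (N:ℤ) ((m:ℤ)+1))^2 ≤
      (1/36) * (((m - N : ℕ):ℝ)+1)⁻¹ - (1/36) * ((m:ℝ)+1)⁻¹ := by
    intro m hm
    have hcast : (m:ℝ) + 1 - (N:ℝ) = ((m - N : ℕ):ℝ) + 1 := by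
      have : ((m - N : ℕ):ℝ) = (m:ℝ) - (N:ℝ) := Nat.cast_sub hm
      linarith
    rw [hcform m, if_pos hm, hcast]
    set b := 1 / (6 * Real.sqrt ((m:ℝ)+1)) with hbdef
    set a := 1 / (6 * Real.sqrt (((m-N:ℕ):ℝ)+1)) with hadef
    have hb2 : b^2 = (1/36) * ((m:ℝ)+1)⁻¹ := sqA _ (Nat.cast_nonneg m)
    have ha2 : a^2 = (1/36) * (((m-N:ℕ):ℝ)+1)⁻¹ := sqA _ (Nat.cast_nonneg _)
    have hba : b ≤ a := Amono (m:ℝ) ((m-N:ℕ):ℝ) (Nat.cast_nonneg _)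
      (by exact_mod_cast Nat.sub_le m N)
    have hb0 : 0 ≤ b := by positivity
    rw [← hb2, ← ha2]
    nlinarith [sq_nonneg (a-b)]
  -- harmonic as a real sum
  have hHr : (harmonic N : ℝ) = ∑ j ∈ Finset.range N, ((j:ℝ)+1)⁻¹ := by
    simp only [harmonic, Rat.cast_sum, Rat.cast_inv, Rat.cast_natCast]
    push_cast
    rfl
  have hHnn : (0:ℝ) ≤ (harmonic N : ℝ) := by
    rw [hHr]; positivity
  -- partial sum bound
  have hub : ∀ M : ℕ, ∑ m ∈ Finset.range M, (c (N:ℤ) ((m:ℤ)+1))^2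
      ≤ (1/18) * (harmonic N : ℝ) := by
    intro M
    have hD : ∑ m ∈ Finset.range M, (c (N:ℤ) ((m:ℤ)+1))^2
        ≤ ∑ m ∈ Finset.range M, (if m < N then (1/36) * ((m:ℝ)+1)⁻¹
            else (1/36) * (((m-N:ℕ):ℝ)+1)⁻¹ - (1/36)*((m:ℝ)+1)⁻¹) := by
      apply Finset.sum_le_sum
      intro m _
      by_cases hm : m < N
      · rw [if_pos hm, key1 m hm]
      · rw [if_neg hm]; exact key2 m (Nat.not_lt.mp hm)
    refine hD.trans ?_
    have hsumN : ∑ j ∈ Finset.range N, ((1:ℝ)/36) * ((j:ℝ)+1)⁻¹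
        = (1/36) * (harmonic N : ℝ) := by
      rw [hHr, Finset.mul_sum]
    have h0' : ∀ j : ℕ, (0:ℝ) ≤ (1/36) * ((j:ℝ)+1)⁻¹ := by
      intro j; positivity
    rcases le_or_gt M N with hMN | hNM
    · have : ∑ m ∈ Finset.range M, (if m < N then ((1:ℝ)/36) * ((m:ℝ)+1)⁻¹
            else (1/36) * (((m-N:ℕ):ℝ)+1)⁻¹ - (1/36)*((m:ℝ)+1)⁻¹)
          = ∑ m ∈ Finset.range M, (1/36) * ((m:ℝ)+1)⁻¹ := by
        apply Finset.sum_congr rfl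
        intro m hm
        rw [if_pos (by simp at hm; omega)]
      rw [this]
      have h2 : ∑ m ∈ Finset.range M, ((1:ℝ)/36) * ((m:ℝ)+1)⁻¹
          ≤ ∑ m ∈ Finset.range N, (1/36) * ((m:ℝ)+1)⁻¹ :=
        Finset.sum_le_sum_of_subset_of_nonneg (Finset.range_subset_range.mpr hMN)
          (fun i _ _ => h0' i)
      rw [hsumN] at h2
      linarith
    · -- split range M into range N and Ico N M
      have hsplit : ∑ m ∈ Finset.range N, (if m < N then ((1:ℝ)/36) * ((m:ℝ)+1)⁻¹
            else (1/36) * (((m-N:ℕ):ℝ)+1)⁻¹ - (1/36)*((m:ℝ)+1)⁻¹)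
          + ∑ m ∈ Finset.Ico N M, (if m < N then ((1:ℝ)/36) * ((m:ℝ)+1)⁻¹
            else (1/36) * (((m-N:ℕ):ℝ)+1)⁻¹ - (1/36)*((m:ℝ)+1)⁻¹)
          = ∑ m ∈ Finset.range M, (if m < N then ((1:ℝ)/36) * ((m:ℝ)+1)⁻¹
            else (1/36) * (((m-N:ℕ):ℝ)+1)⁻¹ - (1/36)*((m:ℝ)+1)⁻¹) := by
        rw [Finset.range_eq_Ico, Finset.range_eq_Ico]
        exact Finset.sum_Ico_consecutive _ (Nat.zero_le N) hNM.le
      rw [← hsplit]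
      have hA : ∑ m ∈ Finset.range N, (if m < N then ((1:ℝ)/36) * ((m:ℝ)+1)⁻¹
            else (1/36) * (((m-N:ℕ):ℝ)+1)⁻¹ - (1/36)*((m:ℝ)+1)⁻¹)
          = (1/36) * (harmonic N : ℝ) := by
        rw [← hsumN]
        apply Finset.sum_congr rfl
        intro m hm
        rw [if_pos (by simp at hm; omega)]
      have hB : ∑ m ∈ Finset.Ico N M, (if m < N then ((1:ℝ)/36) * ((m:ℝ)+1)⁻¹
            else (1/36) * (((m-N:ℕ):ℝ)+1)⁻¹ - (1/36)*((m:ℝ)+1)⁻¹)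
          ≤ (1/36) * (harmonic N : ℝ) := by
        have heq : ∑ m ∈ Finset.Ico N M, (if m < N then ((1:ℝ)/36) * ((m:ℝ)+1)⁻¹
            else (1/36) * (((m-N:ℕ):ℝ)+1)⁻¹ - (1/36)*((m:ℝ)+1)⁻¹)
            = ∑ j ∈ Finset.range (M - N),
              ((fun j : ℕ => (1/36) * ((j:ℝ)+1)⁻¹) j
                - (fun j : ℕ => (1/36) * ((j:ℝ)+1)⁻¹) (j + N)) := by
          rw [Finset.sum_Ico_eq_sum_range]
          apply Finset.sum_congr rfl
          intro j _
          rw [if_neg (by omega)]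
          have h1 : N + j - N = j := by omega
          rw [h1]
          push_cast
          ring_nf
        rw [heq]
        have := tele_sum (fun j : ℕ => (1/36) * ((j:ℝ)+1)⁻¹) h0' N (M - N)
        calc _ ≤ ∑ j ∈ Finset.range N, ((1:ℝ)/36) * ((j:ℝ)+1)⁻¹ := this
          _ = (1/36) * (harmonic N : ℝ) := hsumN
      linarith
  have h0 : ∀ m : ℕ, 0 ≤ (c (N:ℤ) ((m:ℤ)+1))^2 := fun m => sq_nonneg _
  have hsummable : Summable (fun m : ℕ => (c (N:ℤ) ((m:ℤ)+1))^2) :=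
    summable_of_sum_range_le h0 hub
  constructor
  · rw [← hre]
    have hlog : Real.log (1 + (N:ℝ)) ≤ (harmonic N : ℝ) := by
      have := log_add_one_le_harmonic N
      have hc' : ((N:ℕ)+1 : ℝ) = 1 + (N:ℝ) := by ring
      rw [← hc']
      exact_mod_cast this
    have hsum : (1/36) * (harmonic N : ℝ) = ∑ m ∈ Finset.range N, (c (N:ℤ) ((m:ℤ)+1))^2 := by
      rw [hHr, Finset.mul_sum]
      exact Finset.sum_congr rfl fun m hm => (key1 m (Finset.mem_range.mp hm)).symm
    calc (1/36) * Real.log (1 + (N:ℝ)) ≤ (1/36) * (harmonic N : ℝ) := by linarith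
      _ = ∑ m ∈ Finset.range N, (c (N:ℤ) ((m:ℤ)+1))^2 := hsum
      _ ≤ ∑' m : ℕ, (c (N:ℤ) ((m:ℤ)+1))^2 :=
        Summable.sum_le_tsum _ (fun i _ => h0 i) hsummable
  · rw [← hre]
    have h1 := Real.tsum_le_of_sum_range_le h0 hub
    have h2 : (harmonic N : ℝ) ≤ 1 + Real.log N := harmonic_le_one_add_log N
    calc ∑' m : ℕ, (c (N:ℤ) ((m:ℤ)+1))^2 ≤ (1/18) * (harmonic N : ℝ) := h1
      _ ≤ (1/18) * (1 + Real.log N) := by linarith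

theorem stmt9 (μ : ℤ → ℝ)
    (hμ : ∀ n : ℤ, μ n = if 1 ≤ n then 1 / 2 + 1 / (6 * Real.sqrt (n : ℝ)) else 1 / 2)
    (c : ℤ → ℤ → ℝ) (hc : ∀ k n, c k n = μ n - μ (n - k))
    (k : ℤ) (hk : 2 ≤ |k|) :
    (1 / 36) * Real.log (1 + |(k : ℝ)|) ≤ ∑' n : ℤ, (c k n) ^ 2 ∧
      ∑' n : ℤ, (c k n) ^ 2 ≤ (1 / 18) * (1 + Real.log |(k : ℝ)|) := by
  have hk' : 2 ≤ k ∨ k ≤ -2 := by rcases abs_cases k with ⟨h1,_⟩|⟨h1,_⟩ <;> omega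
  rcases le_or_gt 0 k with hk0 | hk0
  · set N := k.toNat with hNdef
    have hkN : k = (N:ℤ) := by omega
    have hN : 2 ≤ N := by omega
    have habs : |(k:ℝ)| = (N:ℝ) := by
      rw [abs_of_nonneg (by exact_mod_cast hk0)]
      exact_mod_cast congrArg (Int.cast : ℤ → ℝ) hkN
    rw [habs, hkN]
    exact key μ hμ c hc N hN
  · set N := (-k).toNat with hNdef
    have hkN : -k = (N:ℤ) := by omega
    have hN : 2 ≤ N := by omega
    have habs : |(k:ℝ)| = (N:ℝ) := by
      rw [abs_of_neg (by exact_mod_cast hk0)]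
      have : ((-k : ℤ) : ℝ) = ((N:ℤ) : ℝ) := congrArg _ hkN
      push_cast at this ⊢
      linarith
    have hshift : ∀ n : ℤ, (c k n)^2 = (c (N:ℤ) (n + N))^2 := by
      intro n
      rw [hc, hc]
      have h1 : n + (N:ℤ) - (N:ℤ) = n := by ring
      have h2 : n - k = n + (N:ℤ) := by omega
      rw [h1, h2]
      ring
    have htsum : ∑' n : ℤ, (c k n)^2 = ∑' n : ℤ, (c (N:ℤ) n)^2 := by
      calc ∑' n : ℤ, (c k n)^2 = ∑' n : ℤ, (c (N:ℤ) (n + N))^2 := tsum_congr hshift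
        _ = ∑' n : ℤ, (c (N:ℤ) n)^2 := (Equiv.addRight (N:ℤ)).tsum_eq fun n => (c (N:ℤ) n)^2
    rw [habs, htsum]
    exact key μ hμ c hc N hN
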